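/- Let Ω ⊂ ℝ^m be a nonempty open set with 0 < |Ω| < ∞. Then t ↦ H_Ω(t) is strictly decreasing on (0,∞). -/

import Mathlib

open Real MeasureTheory

open Complex
open scoped FourierTransform RealInnerProductSpace

noncomputable def hcPhi {m : ℕ} (Ω : Set (EuclideanSpace ℝ (Fin m))) (ξ : EuclideanSpace ℝ (Fin m)) : ℂ :=
  ∫ x in Ω, Complex.exp ((-2 * π * ⟪x, ξ⟫ : ℝ) * Complex.I)

variable {m : ℕ}

lemma hc_kernel_rep {t : ℝ} (ht : 0 < t) (w : EuclideanSpace ℝ (Fin m)) :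
    (((4 * π * t) ^ (-(m : ℝ) / 2) * rexp (-‖w‖ ^ 2 / (4 * t)) : ℝ) : ℂ)
      = ∫ ξ : EuclideanSpace ℝ (Fin m),
          Complex.exp ((-2 * π * ⟪ξ, w⟫ : ℝ) * Complex.I) * Complex.exp (-(4 * π^2 * t : ℂ) * ‖ξ‖ ^ 2) := by
  have hπ : (0:ℝ) < π := Real.pi_pos
  have hrpos : (0:ℝ) < 4 * π ^ 2 * t := by positivity
  have hb : (0:ℝ) < ((4 * π^2 * t : ℝ) : ℂ).re := by rw [Complex.ofReal_re]; exact hrpos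
  have h := fourier_gaussian_innerProductSpace (V := EuclideanSpace ℝ (Fin m))
    (b := ((4 * π^2 * t : ℝ) : ℂ)) hb w
  rw [Real.fourier_eq'] at h
  simp only [smul_eq_mul] at h
  rw [show (-(4 * π^2 * t : ℂ)) = -((4 * π^2 * t : ℝ) : ℂ) by push_cast; ring]
  rw [h]
  have hfr : ((Module.finrank ℝ (EuclideanSpace ℝ (Fin m)) : ℂ) / 2) = (((m : ℝ)/2 : ℝ) : ℂ) := by
    rw [finrank_euclideanSpace_fin]; push_cast; ring
  rw [hfr]
  have h1 : ((π : ℂ) / ((4 * π^2 * t : ℝ) : ℂ)) = (((1 / (4 * π * t) : ℝ)) : ℂ) := by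
    have hπ' : (π:ℂ) ≠ 0 := by exact_mod_cast Real.pi_pos.ne'
    have ht' : (t:ℂ) ≠ 0 := by exact_mod_cast ht.ne'
    simp only [Complex.ofReal_div, Complex.ofReal_mul, Complex.ofReal_one, Complex.ofReal_ofNat,
      Complex.ofReal_pow]
    field_simp
  rw [h1, ← Complex.ofReal_cpow (by positivity) ((m:ℝ)/2)]
  have h2 : (1 / (4 * π * t) : ℝ) ^ ((m:ℝ)/2) = (4 * π * t) ^ (-(m:ℝ)/2) := by
    rw [one_div, Real.inv_rpow (by positivity), neg_div, Real.rpow_neg (by positivity)]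
  rw [h2]
  have h3 : (-(π:ℂ) ^ 2 * (‖w‖:ℂ) ^ 2 / ((4 * π^2 * t : ℝ) : ℂ)) = ((-‖w‖^2 / (4*t) : ℝ) : ℂ) := by
    have hπ' : (π:ℂ) ≠ 0 := by exact_mod_cast hπ.ne'
    have ht' : (t:ℂ) ≠ 0 := by exact_mod_cast ht.ne'
    push_cast
    field_simp
  rw [h3, ← Complex.ofReal_exp]
  push_cast
  ring

lemma hcPhi_continuous (Ω : Set (EuclideanSpace ℝ (Fin m))) (hΩ : MeasurableSet Ω)
    (hvol : volume Ω < ⊤) : Continuous (hcPhi Ω) := by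
  have hint : Integrable (Ω.indicator fun _ => (1:ℂ)) := by
    rw [integrable_indicator_iff hΩ]
    exact integrableOn_const hvol.ne
  have heq : hcPhi Ω = 𝓕 (Ω.indicator fun _ => (1:ℂ)) := by
    funext ξ
    rw [Real.fourier_eq']
    rw [hcPhi, ← integral_indicator hΩ]
    congr 1
    funext v
    by_cases hv : v ∈ Ω <;> simp [hv]
  rw [heq]
  exact VectorFourier.fourierIntegral_continuous Real.continuous_fourierChar
    continuous_inner hint

lemma hcPhi_zero (Ω : Set (EuclideanSpace ℝ (Fin m))) :
    hcPhi Ω 0 = ((volume Ω).toReal : ℂ) := by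
  simp [hcPhi, Measure.real]

lemma hcExp_continuous (ξ : EuclideanSpace ℝ (Fin m)) :
    Continuous fun x : EuclideanSpace ℝ (Fin m) =>
      Complex.exp ((-2 * π * ⟪x, ξ⟫ : ℝ) * Complex.I) := by
  apply Complex.continuous_exp.comp
  apply Continuous.mul _ continuous_const
  apply Complex.continuous_ofReal.comp
  exact (continuous_const.mul (continuous_inner.comp
    (continuous_id.prodMk continuous_const : Continuous fun x :
      EuclideanSpace ℝ (Fin m) => (x, ξ))))

lemma hcPhi_norm_le (Ω : Set (EuclideanSpace ℝ (Fin m))) (hvol : volume Ω < ⊤)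
    (ξ : EuclideanSpace ℝ (Fin m)) : ‖hcPhi Ω ξ‖ ≤ (volume Ω).toReal := by
  have := norm_setIntegral_le_of_norm_le_const (C := 1) (μ := volume) (s := Ω)
    (f := fun x => Complex.exp ((-2 * π * ⟪x, ξ⟫ : ℝ) * Complex.I)) hvol
    (fun x _ => le_of_eq (by rw [Complex.norm_exp_ofReal_mul_I]))
  simpa [hcPhi, Measure.real] using this

lemma hc_gauss_int {a : ℝ} (ha : 0 < a) :
    Integrable (fun ξ : EuclideanSpace ℝ (Fin m) => rexp (-a * ‖ξ‖^2)) := by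
  have h := GaussianFourier.integrable_cexp_neg_mul_sq_norm_add (V := EuclideanSpace ℝ (Fin m))
      (b := (a:ℂ)) (by simpa using ha) 0 0
  have h2 := h.norm
  refine h2.congr ?_
  filter_upwards with v
  simp [Complex.norm_exp, ← Complex.ofReal_pow]

lemma hc_main (Ω : Set (EuclideanSpace ℝ (Fin m))) (hΩ : MeasurableSet Ω)
    (hvol : volume Ω < ⊤) {t : ℝ} (ht : 0 < t) :
    ∫ x in Ω, ∫ y in Ω, (4 * π * t) ^ (-(m : ℝ) / 2) * rexp (-(dist x y) ^ 2 / (4 * t))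
      = ∫ ξ : EuclideanSpace ℝ (Fin m), rexp (-(4 * π ^ 2 * t) * ‖ξ‖ ^ 2) * ‖hcPhi Ω ξ‖ ^ 2 := by
  classical
  haveI : IsFiniteMeasure (volume.restrict Ω : Measure (EuclideanSpace ℝ (Fin m))) :=
    ⟨by simpa [Measure.restrict_apply_univ] using hvol⟩
  have hπ : (0:ℝ) < π := Real.pi_pos
  have hapos : (0:ℝ) < 4 * π ^ 2 * t := by positivity
  apply Complex.ofReal_injective
  set ν : Measure (EuclideanSpace ℝ (Fin m)) := volume.restrict Ω with hν
  set G : (EuclideanSpace ℝ (Fin m) × EuclideanSpace ℝ (Fin m)) → EuclideanSpace ℝ (Fin m) → ℂ :=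
    fun z ξ => Complex.exp ((-2 * π * ⟪ξ, z.1 - z.2⟫ : ℝ) * Complex.I)
      * Complex.exp (-(4 * π ^ 2 * t : ℂ) * ‖ξ‖ ^ 2) with hGdef
  have hnorm2 : ∀ ξ : EuclideanSpace ℝ (Fin m),
      Complex.exp (-(4 * π ^ 2 * t : ℂ) * ‖ξ‖ ^ 2) = ((rexp (-(4 * π ^ 2 * t) * ‖ξ‖ ^ 2) : ℝ) : ℂ) := by
    intro ξ
    rw [show -(4 * π ^ 2 * t : ℂ) * (‖ξ‖ : ℂ) ^ 2 = ((-(4 * π ^ 2 * t) * ‖ξ‖ ^ 2 : ℝ) : ℂ) by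
      push_cast; ring, Complex.ofReal_exp]
  -- kernel integrability
  have hKcont : Continuous fun z : EuclideanSpace ℝ (Fin m) × EuclideanSpace ℝ (Fin m) =>
      (4 * π * t) ^ (-(m:ℝ)/2) * rexp (-(dist z.1 z.2) ^ 2 / (4 * t)) := by
    fun_prop
  have hKint : Integrable (fun z : EuclideanSpace ℝ (Fin m) × EuclideanSpace ℝ (Fin m) =>
      (4 * π * t) ^ (-(m:ℝ)/2) * rexp (-(dist z.1 z.2) ^ 2 / (4 * t))) (ν.prod ν) := by
    refine (integrable_const ((4 * π * t) ^ (-(m:ℝ)/2))).mono' hKcont.aestronglyMeasurable ?_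
    filter_upwards with z
    rw [Real.norm_of_nonneg (by positivity)]
    have h1 : rexp (-(dist z.1 z.2) ^ 2 / (4 * t)) ≤ 1 := Real.exp_le_one_iff.2
      (div_nonpos_of_nonpos_of_nonneg (neg_nonpos.2 (by positivity)) (by positivity))
    calc (4 * π * t) ^ (-(m:ℝ)/2) * rexp (-(dist z.1 z.2) ^ 2 / (4 * t))
        ≤ (4 * π * t) ^ (-(m:ℝ)/2) * 1 :=
          mul_le_mul_of_nonneg_left h1 (Real.rpow_nonneg (by positivity) _)
      _ = (4 * π * t) ^ (-(m:ℝ)/2) := mul_one _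
  -- G integrability on product
  have hGcont : Continuous fun q :
      (EuclideanSpace ℝ (Fin m) × EuclideanSpace ℝ (Fin m)) × EuclideanSpace ℝ (Fin m) =>
      G q.1 q.2 := by
    rw [hGdef]
    apply Continuous.mul
    · apply Complex.continuous_exp.comp
      apply Continuous.mul _ continuous_const
      apply Complex.continuous_ofReal.comp
      exact continuous_const.mul (continuous_inner.comp
        (continuous_snd.prodMk ((continuous_fst.comp continuous_fst).sub
          (continuous_snd.comp continuous_fst))))
    · apply Complex.continuous_exp.comp
      apply Continuous.mul continuous_const
      exact (Complex.continuous_ofReal.comp (continuous_norm.comp continuous_snd)).pow 2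
  have hGint : Integrable (Function.uncurry G) ((ν.prod ν).prod volume) := by
    have hdom : Integrable (fun q :
        (EuclideanSpace ℝ (Fin m) × EuclideanSpace ℝ (Fin m)) × EuclideanSpace ℝ (Fin m) =>
        (1:ℝ) * rexp (-(4 * π ^ 2 * t) * ‖q.2‖ ^ 2)) ((ν.prod ν).prod volume) :=
      (integrable_const (1:ℝ)).mul_prod (hc_gauss_int hapos)
    simp only [one_mul] at hdom
    refine hdom.mono' hGcont.aestronglyMeasurable ?_
    filter_upwards with q
    calc ‖Function.uncurry G q‖
        = ‖Complex.exp ((-2 * π * ⟪q.2, q.1.1 - q.1.2⟫ : ℝ) * Complex.I)‖ *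
          ‖Complex.exp (-(4 * π ^ 2 * t : ℂ) * ‖q.2‖ ^ 2)‖ := norm_mul _ _
      _ = rexp (-(4 * π ^ 2 * t) * ‖q.2‖ ^ 2) := by
          rw [hnorm2 q.2, Complex.norm_exp_ofReal_mul_I, one_mul,
            Complex.norm_real, Real.norm_of_nonneg (Real.exp_pos _).le]
      _ ≤ rexp (-(4 * π ^ 2 * t) * ‖q.2‖ ^ 2) := le_refl _
  -- the chain
  have huncurry : (Function.uncurry fun x y => ∫ ξ, G (x, y) ξ)
      = fun z : EuclideanSpace ℝ (Fin m) × EuclideanSpace ℝ (Fin m) =>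
        (((4 * π * t) ^ (-(m:ℝ)/2) * rexp (-(dist z.1 z.2) ^ 2 / (4 * t)) : ℝ) : ℂ) := by
    funext z
    rw [Function.uncurry, dist_eq_norm]
    exact (hc_kernel_rep ht (z.1 - z.2)).symm
  have hinner : ∀ ξ : EuclideanSpace ℝ (Fin m),
      (∫ z, G z ξ ∂(ν.prod ν)) = ((rexp (-(4 * π ^ 2 * t) * ‖ξ‖ ^ 2) * ‖hcPhi Ω ξ‖ ^ 2 : ℝ) : ℂ) := by
    intro ξ
    have hsplit : ∀ z : EuclideanSpace ℝ (Fin m) × EuclideanSpace ℝ (Fin m),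
        G z ξ = (fun x : EuclideanSpace ℝ (Fin m) =>
            Complex.exp ((-2 * π * ⟪x, ξ⟫ : ℝ) * Complex.I)) z.1 *
          ((fun y : EuclideanSpace ℝ (Fin m) =>
            Complex.exp ((2 * π * ⟪y, ξ⟫ : ℝ) * Complex.I)) z.2 *
            Complex.exp (-(4 * π ^ 2 * t : ℂ) * ‖ξ‖ ^ 2)) := by
      intro z
      rw [hGdef]
      simp only
      rw [show ((-2 * π * ⟪ξ, z.1 - z.2⟫ : ℝ) : ℂ) * Complex.I
          = ((-2 * π * ⟪z.1, ξ⟫ : ℝ) : ℂ) * Complex.I + ((2 * π * ⟪z.2, ξ⟫ : ℝ) : ℂ) * Complex.I by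
        rw [inner_sub_right, real_inner_comm ξ z.1, real_inner_comm ξ z.2]; push_cast; ring,
        Complex.exp_add]
      ring
    calc (∫ z, G z ξ ∂(ν.prod ν))
        = ∫ z, (fun x : EuclideanSpace ℝ (Fin m) =>
            Complex.exp ((-2 * π * ⟪x, ξ⟫ : ℝ) * Complex.I)) z.1 *
          ((fun y : EuclideanSpace ℝ (Fin m) =>
            Complex.exp ((2 * π * ⟪y, ξ⟫ : ℝ) * Complex.I)) z.2 *
            Complex.exp (-(4 * π ^ 2 * t : ℂ) * ‖ξ‖ ^ 2)) ∂(ν.prod ν) := by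
          exact integral_congr_ae (Filter.Eventually.of_forall hsplit)
      _ = (∫ x in Ω, Complex.exp ((-2 * π * ⟪x, ξ⟫ : ℝ) * Complex.I)) *
          ∫ y in Ω, Complex.exp ((2 * π * ⟪y, ξ⟫ : ℝ) * Complex.I) *
            Complex.exp (-(4 * π ^ 2 * t : ℂ) * ‖ξ‖ ^ 2) :=
          integral_prod_mul (μ := ν) (ν := ν)
            (fun x : EuclideanSpace ℝ (Fin m) => Complex.exp ((-2 * π * ⟪x, ξ⟫ : ℝ) * Complex.I))
            (fun y : EuclideanSpace ℝ (Fin m) => Complex.exp ((2 * π * ⟪y, ξ⟫ : ℝ) * Complex.I) *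
              Complex.exp (-(4 * π ^ 2 * t : ℂ) * ‖ξ‖ ^ 2))
      _ = hcPhi Ω ξ * ((starRingEnd ℂ) (hcPhi Ω ξ) * Complex.exp (-(4 * π ^ 2 * t : ℂ) * ‖ξ‖ ^ 2)) := by
          rw [integral_mul_const]
          congr 1
          congr 1
          rw [hcPhi, ← integral_conj]
          apply integral_congr_ae
          filter_upwards with y
          rw [← Complex.exp_conj]
          congr 1
          simp only [map_mul, Complex.conj_I, Complex.conj_ofReal]
          push_cast
          ring
      _ = ((rexp (-(4 * π ^ 2 * t) * ‖ξ‖ ^ 2) * ‖hcPhi Ω ξ‖ ^ 2 : ℝ) : ℂ) := by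
          rw [← mul_assoc, Complex.mul_conj, hnorm2 ξ]
          rw [Complex.normSq_eq_norm_sq]
          push_cast
          ring
  calc (((∫ x in Ω, ∫ y in Ω,
          (4 * π * t) ^ (-(m : ℝ) / 2) * rexp (-(dist x y) ^ 2 / (4 * t))) : ℝ) : ℂ)
      = ∫ x in Ω, (((∫ y in Ω,
          (4 * π * t) ^ (-(m : ℝ) / 2) * rexp (-(dist x y) ^ 2 / (4 * t))) : ℝ) : ℂ) :=
        integral_ofReal.symm
    _ = ∫ x in Ω, ∫ y in Ω, (((4 * π * t) ^ (-(m : ℝ) / 2) * rexp (-(dist x y) ^ 2 / (4 * t)) : ℝ) : ℂ) := by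
        exact integral_congr_ae (Filter.Eventually.of_forall fun x => integral_ofReal.symm)
    _ = ∫ x in Ω, ∫ y in Ω, ∫ ξ, G (x, y) ξ := by
        apply integral_congr_ae
        filter_upwards with x
        apply integral_congr_ae
        filter_upwards with y
        rw [dist_eq_norm]
        exact hc_kernel_rep ht (x - y)
    _ = ∫ z, (fun z : EuclideanSpace ℝ (Fin m) × EuclideanSpace ℝ (Fin m) => ∫ ξ, G z ξ) z ∂(ν.prod ν) := by
        apply integral_integral
        rw [show (Function.uncurry fun x y => ∫ ξ, G (x, y) ξ) = _ from huncurry]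
        exact hKint.ofReal
    _ = ∫ ξ, ∫ z, G z ξ ∂(ν.prod ν) := integral_integral_swap hGint
    _ = ∫ ξ : EuclideanSpace ℝ (Fin m),
          ((rexp (-(4 * π ^ 2 * t) * ‖ξ‖ ^ 2) * ‖hcPhi Ω ξ‖ ^ 2 : ℝ) : ℂ) :=
        integral_congr_ae (Filter.Eventually.of_forall hinner)
    _ = (((∫ ξ : EuclideanSpace ℝ (Fin m),
          rexp (-(4 * π ^ 2 * t) * ‖ξ‖ ^ 2) * ‖hcPhi Ω ξ‖ ^ 2) : ℝ) : ℂ) :=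
        integral_ofReal (f := fun ξ : EuclideanSpace ℝ (Fin m) =>
          rexp (-(4 * π ^ 2 * t) * ‖ξ‖ ^ 2) * ‖hcPhi Ω ξ‖ ^ 2)

theorem heat_content_strictAnti (m : ℕ) (hm : 1 ≤ m)
    (Ω : Set (EuclideanSpace ℝ (Fin m))) (hΩ : IsOpen Ω) (hne : Ω.Nonempty)
    (hpos : 0 < volume Ω) (hvol : volume Ω < ⊤) :
    StrictAntiOn (fun t : ℝ => ∫ x in Ω, ∫ y in Ω,
        (4 * Real.pi * t) ^ (-(m : ℝ) / 2) * Real.exp (-(dist x y) ^ 2 / (4 * t)))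
      (Set.Ioi 0) := by
  haveI : Nonempty (Fin m) := ⟨⟨0, hm⟩⟩
  haveI : Nontrivial (EuclideanSpace ℝ (Fin m)) := by
    infer_instance
  intro s hs t ht hst
  simp only [Set.mem_Ioi] at hs ht
  simp only []
  rw [hc_main Ω hΩ.measurableSet hvol hs, hc_main Ω hΩ.measurableSet hvol ht]
  set F : EuclideanSpace ℝ (Fin m) → ℝ := fun ξ => ‖hcPhi Ω ξ‖ ^ 2 with hF
  have hFc : Continuous F := ((hcPhi_continuous Ω hΩ.measurableSet hvol).norm).pow 2
  have hFnn : ∀ ξ, 0 ≤ F ξ := fun ξ => by positivity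
  have hM : (0:ℝ) < (volume Ω).toReal := ENNReal.toReal_pos hpos.ne' hvol.ne
  have hFle : ∀ ξ, F ξ ≤ (volume Ω).toReal ^ 2 := fun ξ => by
    rw [hF]
    exact pow_le_pow_left₀ (norm_nonneg _) (hcPhi_norm_le Ω hvol ξ) 2
  have hint : ∀ {a : ℝ}, 0 < a →
      Integrable (fun ξ : EuclideanSpace ℝ (Fin m) => rexp (-a * ‖ξ‖ ^ 2) * F ξ) := by
    intro a ha
    refine ((hc_gauss_int ha).const_mul ((volume Ω).toReal ^ 2)).mono'
      ((Real.continuous_exp.comp (by fun_prop)).mul hFc).aestronglyMeasurable ?_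
    filter_upwards with ξ
    rw [Real.norm_of_nonneg (by positivity)]
    calc rexp (-a * ‖ξ‖ ^ 2) * F ξ ≤ rexp (-a * ‖ξ‖ ^ 2) * (volume Ω).toReal ^ 2 :=
          mul_le_mul_of_nonneg_left (hFle ξ) (Real.exp_pos _).le
      _ = (volume Ω).toReal ^ 2 * rexp (-a * ‖ξ‖ ^ 2) := mul_comm _ _
  have hπ : (0:ℝ) < π := Real.pi_pos
  have has : (0:ℝ) < 4 * π ^ 2 * s := by positivity
  have hat : (0:ℝ) < 4 * π ^ 2 * t := by positivity
  rw [← sub_pos, ← integral_sub (by simpa using hint has) (by simpa using hint hat)]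
  have hdiffeq : (fun ξ : EuclideanSpace ℝ (Fin m) =>
      rexp (-(4 * π ^ 2 * s) * ‖ξ‖ ^ 2) * ‖hcPhi Ω ξ‖ ^ 2
        - rexp (-(4 * π ^ 2 * t) * ‖ξ‖ ^ 2) * ‖hcPhi Ω ξ‖ ^ 2)
      = fun ξ => (rexp (-(4 * π ^ 2 * s) * ‖ξ‖ ^ 2) - rexp (-(4 * π ^ 2 * t) * ‖ξ‖ ^ 2)) * F ξ := by
    funext ξ; rw [hF, sub_mul]
  rw [hdiffeq]
  have hnn : ∀ ξ : EuclideanSpace ℝ (Fin m),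
      0 ≤ (rexp (-(4 * π ^ 2 * s) * ‖ξ‖ ^ 2) - rexp (-(4 * π ^ 2 * t) * ‖ξ‖ ^ 2)) * F ξ := by
    intro ξ
    apply mul_nonneg _ (hFnn ξ)
    rw [sub_nonneg]
    apply Real.exp_le_exp.2
    have h0 : 4 * π ^ 2 * s ≤ 4 * π ^ 2 * t := by
      nlinarith [mul_pos (show (0:ℝ) < 4 * π ^ 2 by positivity) (sub_pos.2 hst)]
    have h1 := mul_le_mul_of_nonneg_right h0 (sq_nonneg ‖ξ‖)
    linarith
  have hintd : Integrable (fun ξ : EuclideanSpace ℝ (Fin m) =>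
      (rexp (-(4 * π ^ 2 * s) * ‖ξ‖ ^ 2) - rexp (-(4 * π ^ 2 * t) * ‖ξ‖ ^ 2)) * F ξ) := by
    refine ((hint has).sub (hint hat)).congr ?_
    filter_upwards with ξ
    simp only [Pi.sub_apply]
    rw [sub_mul]
  rw [integral_pos_iff_support_of_nonneg_ae (Filter.Eventually.of_forall hnn) hintd]
  -- find a ball where F is positive
  have h0mem : (0 : EuclideanSpace ℝ (Fin m)) ∈ F ⁻¹' Set.Ioi 0 := by
    simp only [Set.mem_preimage, Set.mem_Ioi, hF, hcPhi_zero]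
    simpa using pow_pos hM 2
  obtain ⟨r, hr, hball⟩ := Metric.isOpen_iff.1 (isOpen_Ioi.preimage hFc) 0 h0mem
  have hsub : Metric.ball (0 : EuclideanSpace ℝ (Fin m)) r \ {0} ⊆
      Function.support fun ξ => (rexp (-(4 * π ^ 2 * s) * ‖ξ‖ ^ 2)
        - rexp (-(4 * π ^ 2 * t) * ‖ξ‖ ^ 2)) * F ξ := by
    rintro ξ ⟨hξball, hξne⟩
    have hξ : ξ ≠ 0 := by simpa using hξne
    have hnormpos : 0 < ‖ξ‖ ^ 2 := pow_pos (norm_pos_iff.2 hξ) 2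
    have hFpos : 0 < F ξ := hball hξball
    apply ne_of_gt
    apply mul_pos _ hFpos
    rw [sub_pos]
    apply Real.exp_lt_exp.2
    have h0 : 4 * π ^ 2 * s < 4 * π ^ 2 * t := by
      nlinarith [mul_pos (show (0:ℝ) < 4 * π ^ 2 by positivity) (sub_pos.2 hst)]
    have h1 := mul_lt_mul_of_pos_right h0 hnormpos
    linarith
  calc (0 : ENNReal) < volume (Metric.ball (0 : EuclideanSpace ℝ (Fin m)) r \ {0}) := by
        rw [measure_diff_null (measure_singleton 0)]
        exact Metric.measure_ball_pos volume 0 hr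
    _ ≤ volume (Function.support fun ξ => (rexp (-(4 * π ^ 2 * s) * ‖ξ‖ ^ 2)
        - rexp (-(4 * π ^ 2 * t) * ‖ξ‖ ^ 2)) * F ξ) := measure_mono hsub
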